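/- Let V be a real Hilbert space, (X, μ) a measure space, and γ : V → L²(μ; ℝ) a bounded linear map with ‖γv‖_{L²(μ)} ≤ c_V ‖v‖_V for all v ∈ V (some c_V > 0). Let r : X × ℝ → ℝ satisfy r(x,s) ≥ 0, x ↦ r(x,s) measurable for each s, r(·,0) ∈ L²(μ), and |r(x,s₁) − r(x,s₂)| ≤ L_r|s₁ − s₂| for all x, s₁, s₂ (some L_r > 0). For η, v ∈ V define j(η, v) = ∫_X r(x, |(γη)(x)|) |(γv)(x)| dμ(x). Then for all η₁, η₂, v₁, v₂ ∈ V: j(η₁, v₂) − j(η₁, v₁) + j(η₂, v₁) − j(η₂, v₂) ≤ c_V² L_r ‖η₁ − η₂‖_V ‖v₁ − v₂‖_V. -/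

import Mathlib

open MeasureTheory

private lemma l2mul {X : Type*} [MeasurableSpace X] {μ : Measure X} {f g : X → ℝ}
    (hf : MemLp f 2 μ) (hg : MemLp g 2 μ) :
    Integrable (fun x => f x * g x) μ := by
  have h := L2.integrable_inner (𝕜 := ℝ) (hf.toLp f) (hg.toLp g)
  refine h.congr ?_
  filter_upwards [hf.coeFn_toLp, hg.coeFn_toLp] with x h1 h2
  simp [h1, h2, RCLike.inner_apply, mul_comm]

private lemma rrepr {X : Type*} (r : X × ℝ → ℝ) (L_r : ℝ)
    (hr0 : ∀ x s, 0 ≤ r (x, s)) (hLr : 0 < L_r)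
    (hrlip : ∀ x s₁ s₂, |r (x, s₁) - r (x, s₂)| ≤ L_r * |s₁ - s₂|)
    (x : X) (s : ℝ) :
    r (x, s) = ⨅ q : ℚ, (r (x, (q:ℝ)) + L_r * |s - q|) := by
  have hbdd : BddBelow (Set.range fun q : ℚ => r (x, (q:ℝ)) + L_r * |s - q|) := by
    refine ⟨0, ?_⟩
    rintro _ ⟨q, rfl⟩
    exact add_nonneg (hr0 _ _) (mul_nonneg hLr.le (abs_nonneg _))
  refine le_antisymm (le_ciInf fun q => ?_) ?_
  · have h1 := le_abs_self (r (x, s) - r (x, (q:ℝ)))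
    linarith [hrlip x s (q:ℝ)]
  · refine le_of_forall_pos_le_add fun ε hε => ?_
    obtain ⟨q, hq⟩ := exists_rat_near s (by positivity : (0:ℝ) < ε/(2*L_r))
    have h4 : L_r * |s - (q:ℝ)| ≤ ε / 2 := by
      calc L_r * |s - (q:ℝ)| ≤ L_r * (ε/(2*L_r)) :=
            mul_le_mul_of_nonneg_left hq.le hLr.le
        _ = ε/2 := by field_simp
    calc (⨅ q : ℚ, (r (x, (q:ℝ)) + L_r * |s - q|)) ≤ r (x, (q:ℝ)) + L_r * |s - q| :=
          ciInf_le hbdd q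
      _ ≤ r (x, s) + ε := by
          have h1 := le_abs_self (r (x, (q:ℝ)) - r (x, s))
          have h2 := hrlip x (q:ℝ) s
          have h3 : |(q:ℝ) - s| = |s - (q:ℝ)| := abs_sub_comm _ _
          rw [h3] at h2
          linarith

private lemma rmem {X : Type*} [MeasurableSpace X] {μ : Measure X}
    (r : X × ℝ → ℝ) (L_r : ℝ)
    (hr0 : ∀ x s, 0 ≤ r (x, s))
    (hrmeas : ∀ s : ℝ, Measurable fun x => r (x, s))
    (hr02 : MemLp (fun x => r (x, 0)) 2 μ)
    (hLr : 0 < L_r)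
    (hrlip : ∀ x s₁ s₂, |r (x, s₁) - r (x, s₂)| ≤ L_r * |s₁ - s₂|)
    {t : X → ℝ} (ht : MemLp t 2 μ) :
    MemLp (fun x => r (x, |t x|)) 2 μ := by
  have ht' : AEMeasurable t μ := ht.aestronglyMeasurable.aemeasurable
  have hmeas : AEMeasurable (fun x => r (x, |t x|)) μ := by
    have h : AEMeasurable (fun x => ⨅ q : ℚ, (r (x, (q:ℝ)) + L_r * |(|t x|) - q|)) μ :=
      AEMeasurable.iInf fun q =>
        (hrmeas (q:ℝ)).aemeasurable.add
          ((measurable_abs.comp_aemeasurable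
            (((measurable_abs.comp_aemeasurable ht')).sub aemeasurable_const)).const_mul L_r)
    refine h.congr (Filter.Eventually.of_forall fun x => ?_)
    exact (rrepr r L_r hr0 hLr hrlip x (|t x|)).symm
  have hg : MemLp (fun x => ‖r (x, 0)‖ + L_r * ‖t x‖) 2 μ :=
    MemLp.add hr02.norm (ht.norm.const_mul L_r)
  refine MemLp.of_le hg hmeas.aestronglyMeasurable (Filter.Eventually.of_forall fun x => ?_)
  have h1 : r (x, |t x|) ≤ r (x, 0) + L_r * |t x| := by
    have h2 := hrlip x (|t x|) 0
    have h3 := le_abs_self (r (x, |t x|) - r (x, 0))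
    simp only [sub_zero, abs_abs] at h2
    linarith
  have h4 : (0:ℝ) ≤ ‖r (x, 0)‖ + L_r * ‖t x‖ :=
    add_nonneg (norm_nonneg _) (mul_nonneg hLr.le (norm_nonneg _))
  rw [Real.norm_of_nonneg (hr0 _ _), Real.norm_of_nonneg h4]
  calc r (x, |t x|) ≤ r (x, 0) + L_r * |t x| := h1
    _ ≤ ‖r (x, 0)‖ + L_r * ‖t x‖ := by
        rw [Real.norm_eq_abs, Real.norm_eq_abs]
        gcongr; exact le_abs_self _

theorem friction_functional_trace_four_term_estimate
    {V : Type*} [NormedAddCommGroup V] [InnerProductSpace ℝ V] [CompleteSpace V]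
    {X : Type*} [MeasurableSpace X] (μ : Measure X)
    (γ : V →L[ℝ] Lp ℝ 2 μ) (c_V : ℝ) (hcV : 0 < c_V)
    (hγ : ∀ v : V, ‖γ v‖ ≤ c_V * ‖v‖)
    (r : X × ℝ → ℝ) (L_r : ℝ)
    (hr0 : ∀ x s, 0 ≤ r (x, s))
    (hrmeas : ∀ s : ℝ, Measurable fun x => r (x, s))
    (hr02 : MemLp (fun x => r (x, 0)) 2 μ)
    (hLr : 0 < L_r)
    (hrlip : ∀ x s₁ s₂, |r (x, s₁) - r (x, s₂)| ≤ L_r * |s₁ - s₂|) :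
    ∀ η₁ η₂ v₁ v₂ : V,
      (∫ x, r (x, |γ η₁ x|) * |γ v₂ x| ∂μ) - (∫ x, r (x, |γ η₁ x|) * |γ v₁ x| ∂μ)
        + (∫ x, r (x, |γ η₂ x|) * |γ v₁ x| ∂μ) - (∫ x, r (x, |γ η₂ x|) * |γ v₂ x| ∂μ)
      ≤ c_V ^ 2 * L_r * ‖η₁ - η₂‖ * ‖v₁ - v₂‖ := by
  intro η₁ η₂ v₁ v₂
  have habs : ∀ f : Lp ℝ 2 μ, MemLp (fun x => |f x|) 2 μ := fun f => by
    simpa [Real.norm_eq_abs] using (Lp.memLp f).norm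
  have hF₁ : MemLp (fun x => r (x, |γ η₁ x|)) 2 μ :=
    rmem r L_r hr0 hrmeas hr02 hLr hrlip (Lp.memLp (γ η₁))
  have hF₂ : MemLp (fun x => r (x, |γ η₂ x|)) 2 μ :=
    rmem r L_r hr0 hrmeas hr02 hLr hrlip (Lp.memLp (γ η₂))
  have ha : MemLp (fun x => |γ v₂ x|) 2 μ := habs (γ v₂)
  have hb : MemLp (fun x => |γ v₁ x|) 2 μ := habs (γ v₁)
  have hIa : Integrable (fun x => r (x, |γ η₁ x|) * |γ v₂ x|) μ := l2mul hF₁ ha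
  have hIb : Integrable (fun x => r (x, |γ η₁ x|) * |γ v₁ x|) μ := l2mul hF₁ hb
  have hIc : Integrable (fun x => r (x, |γ η₂ x|) * |γ v₁ x|) μ := l2mul hF₂ hb
  have hId : Integrable (fun x => r (x, |γ η₂ x|) * |γ v₂ x|) μ := l2mul hF₂ ha
  have hA : Integrable (fun x => r (x, |γ η₁ x|) * |γ v₂ x| - r (x, |γ η₁ x|) * |γ v₁ x|) μ :=
    hIa.sub hIb
  have hB : Integrable (fun x => r (x, |γ η₂ x|) * |γ v₁ x| - r (x, |γ η₂ x|) * |γ v₂ x|) μ :=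
    hIc.sub hId
  have hW : ⇑(γ (η₁ - η₂)) =ᵐ[μ] fun x => γ η₁ x - γ η₂ x := by
    rw [map_sub]; exact Lp.coeFn_sub _ _
  have hU : ⇑(γ (v₁ - v₂)) =ᵐ[μ] fun x => γ v₁ x - γ v₂ x := by
    rw [map_sub]; exact Lp.coeFn_sub _ _
  -- Step 1: rewrite the four-term expression as one integral
  have hsplit :
      ∫ x, (r (x, |γ η₁ x|) - r (x, |γ η₂ x|)) * ((|γ v₂ x|) - (|γ v₁ x|)) ∂μ
      = ((∫ x, r (x, |γ η₁ x|) * |γ v₂ x| ∂μ) - (∫ x, r (x, |γ η₁ x|) * |γ v₁ x| ∂μ))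
        + ((∫ x, r (x, |γ η₂ x|) * |γ v₁ x| ∂μ) - (∫ x, r (x, |γ η₂ x|) * |γ v₂ x| ∂μ)) := by
    calc ∫ x, (r (x, |γ η₁ x|) - r (x, |γ η₂ x|)) * ((|γ v₂ x|) - (|γ v₁ x|)) ∂μ
        = ∫ x, (r (x, |γ η₁ x|) * |γ v₂ x| - r (x, |γ η₁ x|) * |γ v₁ x|)
            + (r (x, |γ η₂ x|) * |γ v₁ x| - r (x, |γ η₂ x|) * |γ v₂ x|) ∂μ := by
          refine integral_congr_ae (Filter.Eventually.of_forall fun x => ?_)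
          ring
      _ = (∫ x, r (x, |γ η₁ x|) * |γ v₂ x| - r (x, |γ η₁ x|) * |γ v₁ x| ∂μ)
            + ∫ x, r (x, |γ η₂ x|) * |γ v₁ x| - r (x, |γ η₂ x|) * |γ v₂ x| ∂μ :=
          integral_add hA hB
      _ = ((∫ x, r (x, |γ η₁ x|) * |γ v₂ x| ∂μ) - (∫ x, r (x, |γ η₁ x|) * |γ v₁ x| ∂μ))
            + ((∫ x, r (x, |γ η₂ x|) * |γ v₁ x| ∂μ) - (∫ x, r (x, |γ η₂ x|) * |γ v₂ x| ∂μ)) := by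
          rw [integral_sub hIa hIb, integral_sub hIc hId]
  -- Step 2: pointwise bound and integral monotonicity
  have hmono : ∫ x, (r (x, |γ η₁ x|) - r (x, |γ η₂ x|)) * ((|γ v₂ x|) - (|γ v₁ x|)) ∂μ
      ≤ ∫ x, L_r * ((|γ (η₁ - η₂) x|) * (|γ (v₁ - v₂) x|)) ∂μ := by
    refine integral_mono_ae (l2mul (hF₁.sub hF₂) (ha.sub hb))
      ((l2mul (habs (γ (η₁ - η₂))) (habs (γ (v₁ - v₂)))).const_mul L_r) ?_
    filter_upwards [hW, hU] with x hWx hUx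
    have h1 : |r (x, |γ η₁ x|) - r (x, |γ η₂ x|)| ≤ L_r * |γ (η₁ - η₂) x| := by
      refine le_trans (hrlip x _ _) ?_
      rw [hWx]
      exact mul_le_mul_of_nonneg_left (abs_abs_sub_abs_le_abs_sub _ _) hLr.le
    have h2 : |(|γ v₂ x|) - (|γ v₁ x|)| ≤ |γ (v₁ - v₂) x| := by
      refine le_trans (abs_abs_sub_abs_le_abs_sub _ _) ?_
      rw [hUx]
      exact (abs_sub_comm _ _).le
    calc (r (x, |γ η₁ x|) - r (x, |γ η₂ x|)) * ((|γ v₂ x|) - (|γ v₁ x|))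
        ≤ |(r (x, |γ η₁ x|) - r (x, |γ η₂ x|)) * ((|γ v₂ x|) - (|γ v₁ x|))| := le_abs_self _
      _ = |r (x, |γ η₁ x|) - r (x, |γ η₂ x|)| * |(|γ v₂ x|) - (|γ v₁ x|)| := abs_mul _ _
      _ ≤ (L_r * |γ (η₁ - η₂) x|) * |γ (v₁ - v₂) x| :=
          mul_le_mul h1 h2 (abs_nonneg _) (by positivity)
      _ = L_r * ((|γ (η₁ - η₂) x|) * (|γ (v₁ - v₂) x|)) := by ring
  -- Step 3: Cauchy–Schwarz in L²
  have hCS : ∫ x, (|γ (η₁ - η₂) x|) * (|γ (v₁ - v₂) x|) ∂μ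
      ≤ ‖γ (η₁ - η₂)‖ * ‖γ (v₁ - v₂)‖ := by
    have hinner : (inner (𝕜 := ℝ) (|γ (η₁ - η₂)|) (|γ (v₁ - v₂)|) : ℝ)
        = ∫ x, (|γ (η₁ - η₂) x|) * (|γ (v₁ - v₂) x|) ∂μ := by
      rw [L2.inner_def]
      refine integral_congr_ae ?_
      filter_upwards [Lp.coeFn_abs (γ (η₁ - η₂)), Lp.coeFn_abs (γ (v₁ - v₂))] with x h1 h2
      rw [h1, h2]
      simp [RCLike.inner_apply, mul_comm]
    calc ∫ x, (|γ (η₁ - η₂) x|) * (|γ (v₁ - v₂) x|) ∂μ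
        = (inner (𝕜 := ℝ) (|γ (η₁ - η₂)|) (|γ (v₁ - v₂)|) : ℝ) := hinner.symm
      _ ≤ ‖(|γ (η₁ - η₂)| : Lp ℝ 2 μ)‖ * ‖(|γ (v₁ - v₂)| : Lp ℝ 2 μ)‖ := real_inner_le_norm _ _
      _ = ‖γ (η₁ - η₂)‖ * ‖γ (v₁ - v₂)‖ := by rw [norm_abs_eq_norm, norm_abs_eq_norm]
  -- Conclusion
  have hint : ∫ x, L_r * ((|γ (η₁ - η₂) x|) * (|γ (v₁ - v₂) x|)) ∂μ
      = L_r * ∫ x, (|γ (η₁ - η₂) x|) * (|γ (v₁ - v₂) x|) ∂μ := integral_const_mul _ _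
  have hfinal : L_r * ∫ x, (|γ (η₁ - η₂) x|) * (|γ (v₁ - v₂) x|) ∂μ
      ≤ c_V ^ 2 * L_r * ‖η₁ - η₂‖ * ‖v₁ - v₂‖ := by
    have h3 : ‖γ (η₁ - η₂)‖ * ‖γ (v₁ - v₂)‖ ≤ (c_V * ‖η₁ - η₂‖) * (c_V * ‖v₁ - v₂‖) :=
      mul_le_mul (hγ _) (hγ _) (norm_nonneg _) (by positivity)
    nlinarith [hCS, hLr.le, norm_nonneg (γ (η₁ - η₂)), norm_nonneg (γ (v₁ - v₂))]
  linarith [hsplit, hmono, hint, hfinal]
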